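/- arXiv:2511.06308 — 4 statements merged into one kernel-verified Lean document; each statement's English description precedes it below -/
import Mathlib

section
/- Let B ∈ ℚ[[x,y]] be a formal power series in two variables satisfying B = 1 + x·y·B²·(x·B² − (x−1)·(B−1)). Then the coefficient of x^0 y^m in B equals 1 if m = 0 and 0 if m ≥ 1, the coefficient of x^n y^0 equals 0 for n ≥ 1, and for all integers n ≥ 1 and m ≥ 1 the coefficient of x^n y^m in B equals (1/m)·C(m, n−m)·Σ_{j=0}^{n−m} C(n−m, j)·C(n+m−j, 2m+j+1). -/
open PowerSeries Finset Polynomial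

noncomputable section
open PowerSeries Finset

noncomputable section

abbrev R2 := MvPowerSeries (Fin 2) ℚ
abbrev PP := PowerSeries (PowerSeries ℚ)

lemma fin2_decomp (d : Fin 2 →₀ ℕ) :
    d = Finsupp.single 0 (d 0) + Finsupp.single 1 (d 1) := by
  ext i; fin_cases i <;> simp

lemma pair_eval0 (n m : ℕ) :
    (Finsupp.single (0:Fin 2) n + Finsupp.single 1 m : Fin 2 →₀ ℕ) 0 = n := by simp
lemma pair_eval1 (n m : ℕ) :
    (Finsupp.single (0:Fin 2) n + Finsupp.single 1 m : Fin 2 →₀ ℕ) 1 = m := by simp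

lemma pair_eq {n m a b : ℕ} :
    (Finsupp.single (0:Fin 2) n + Finsupp.single 1 m
      = Finsupp.single 0 a + Finsupp.single 1 b) ↔ (n = a ∧ m = b) := by
  constructor
  · intro h
    refine ⟨?_, ?_⟩
    · have h0 := Finsupp.ext_iff.mp h 0; simpa using h0
    · have h1 := Finsupp.ext_iff.mp h 1; simpa using h1
  · rintro ⟨rfl, rfl⟩; rfl

def Tfun (B : R2) : PP := PowerSeries.mk fun m => PowerSeries.mk fun n =>
  MvPowerSeries.coeff (R := ℚ) (Finsupp.single 0 n + Finsupp.single 1 m) B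

lemma Tfun_coeff (B : R2) (n m : ℕ) :
    PowerSeries.coeff (R := ℚ) n (PowerSeries.coeff (R := PowerSeries ℚ) m (Tfun B))
      = MvPowerSeries.coeff (R := ℚ) (Finsupp.single 0 n + Finsupp.single 1 m) B := by
  simp [Tfun]

lemma Tfun_mul (A B : R2) : Tfun (A * B) = Tfun A * Tfun B := by
  ext m n : 2
  rw [PowerSeries.coeff_mul, map_sum, Tfun_coeff, MvPowerSeries.coeff_mul]
  simp only [PowerSeries.coeff_mul, Finset.sum_mul, Finset.mul_sum, Tfun_coeff]
  rw [← Finset.sum_product']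
  refine Finset.sum_nbij' (fun p => ((p.1 1, p.2 1), (p.1 0, p.2 0)))
    (fun q => (Finsupp.single 0 q.2.1 + Finsupp.single 1 q.1.1,
               Finsupp.single 0 q.2.2 + Finsupp.single 1 q.1.2)) ?_ ?_ ?_ ?_ ?_
  · intro p hp
    rw [Finset.HasAntidiagonal.mem_antidiagonal] at hp
    simp only [Finset.mem_product, Finset.HasAntidiagonal.mem_antidiagonal]
    constructor
    · have := Finsupp.ext_iff.mp hp 1; simpa using this
    · have := Finsupp.ext_iff.mp hp 0; simpa using this
  · intro q hq
    simp only [Finset.mem_product, Finset.HasAntidiagonal.mem_antidiagonal] at hq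
    rw [Finset.HasAntidiagonal.mem_antidiagonal]
    obtain ⟨h1, h2⟩ := hq
    rw [← h1, ← h2]
    ext i; fin_cases i <;> simp <;> ring
  · intro p hp
    rw [Finset.HasAntidiagonal.mem_antidiagonal] at hp
    rw [Prod.ext_iff]
    exact ⟨(fin2_decomp _).symm, (fin2_decomp _).symm⟩
  · intro q hq; simp
  · intro p hp; rw [← fin2_decomp, ← fin2_decomp]

lemma pair_eq_zero {n m : ℕ} :
    (Finsupp.single (0:Fin 2) n + Finsupp.single 1 m : Fin 2 →₀ ℕ) = 0 ↔ n = 0 ∧ m = 0 := by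
  have : ((0 : Fin 2 →₀ ℕ)) = Finsupp.single 0 0 + Finsupp.single 1 0 := by simp
  rw [this, pair_eq]

lemma Tfun_one : Tfun 1 = 1 := by
  ext m n : 2
  rw [Tfun_coeff]
  rw [MvPowerSeries.coeff_one]
  by_cases hm : m = 0 <;> by_cases hn : n = 0 <;>
    simp [hm, hn, pair_eq_zero, PowerSeries.coeff_one]

lemma Tfun_add (A B : R2) : Tfun (A + B) = Tfun A + Tfun B := by
  ext m n : 2
  simp [Tfun_coeff, Tfun]

def T : R2 →+* PP where
  toFun := Tfun
  map_one' := Tfun_one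
  map_mul' := Tfun_mul
  map_zero' := by ext m n : 2; simp [Tfun]
  map_add' := Tfun_add

lemma T_coeff (B : R2) (n m : ℕ) :
    PowerSeries.coeff (R := ℚ) n (PowerSeries.coeff (R := PowerSeries ℚ) m (T B))
      = MvPowerSeries.coeff (R := ℚ) (Finsupp.single 0 n + Finsupp.single 1 m) B := Tfun_coeff B n m

lemma T_X0 : T (MvPowerSeries.X 0) = PowerSeries.C (R := PowerSeries ℚ) PowerSeries.X := by
  ext m n : 2
  rw [T_coeff, MvPowerSeries.coeff_X]
  have h1 : (Finsupp.single (0:Fin 2) 1 : Fin 2 →₀ ℕ)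
      = Finsupp.single 0 1 + Finsupp.single 1 0 := by simp
  rw [h1]; simp only [pair_eq]
  rw [PowerSeries.coeff_C]
  by_cases hm : m = 0 <;> by_cases hn : n = 1 <;> simp [hm, hn, PowerSeries.coeff_X]

lemma T_X1 : T (MvPowerSeries.X 1) = PowerSeries.X := by
  ext m n : 2
  rw [T_coeff, MvPowerSeries.coeff_X]
  have h1 : (Finsupp.single (1:Fin 2) 1 : Fin 2 →₀ ℕ)
      = Finsupp.single 0 0 + Finsupp.single 1 1 := by simp
  rw [h1]; simp only [pair_eq]
  rw [PowerSeries.coeff_X]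
  by_cases hm : m = 1 <;> by_cases hn : n = 0 <;>
    simp [hm, hn, PowerSeries.coeff_one, PowerSeries.coeff_zero_eq_constantCoeff]
lemma lagrange {A : Type*} [CommRing A] [Algebra ℚ A] (φ : Polynomial A) (f : PowerSeries A)
    (hf : f = PowerSeries.X * Polynomial.aeval f φ) :
    ∀ n k : ℕ, 1 ≤ k → k ≤ n →
      (n : A) * PowerSeries.coeff (R := A) n (f ^ k) = (k : A) * (φ ^ n).coeff (n - k) := by
  have hX : (PowerSeries.X : PowerSeries A) ∣ f := ⟨_, hf⟩
  have hvanish : ∀ j N : ℕ, N < j → PowerSeries.coeff (R := A) N (f ^ j) = 0 := fun j N hNj =>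
    PowerSeries.X_pow_dvd_iff.mp (pow_dvd_pow_of_dvd hX j) N hNj
  have hc0 : PowerSeries.constantCoeff (R := A) f = 0 := by rw [hf]; simp
  have hexp : ∀ (k N : ℕ), PowerSeries.coeff (R := A) (N + k) (f ^ k)
      = ∑ j ∈ Finset.range ((φ ^ k).natDegree + 1),
          (φ ^ k).coeff j * PowerSeries.coeff (R := A) N (f ^ j) := by
    intro k N
    have h1 : f ^ k = PowerSeries.X ^ k * Polynomial.aeval f (φ ^ k) := by
      rw [map_pow]
      conv_lhs => rw [hf]
      rw [mul_pow]
    rw [h1, PowerSeries.coeff_X_pow_mul, Polynomial.aeval_eq_sum_range, map_sum]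
    refine Finset.sum_congr rfl fun j _ => ?_
    rw [LinearMap.map_smul, smul_eq_mul]
  intro n
  induction n using Nat.strong_induction_on with
  | _ n IH =>
    intro k hk1 hkn
    rcases eq_or_lt_of_le hkn with rfl | hlt
    · -- k = n
      have h0 : PowerSeries.coeff (R := A) k (f ^ k) = (φ ^ k).coeff 0 := by
        have he := hexp k 0
        rw [zero_add] at he
        rw [he, Finset.sum_eq_single 0]
        · simp
        · intro j _ hj0
          have hz : PowerSeries.coeff (R := A) 0 (f ^ j) = 0 := by
            rw [PowerSeries.coeff_zero_eq_constantCoeff, map_pow, hc0, zero_pow hj0]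
          rw [hz, mul_zero]
        · intro h; simp at h
      rw [h0, Nat.sub_self]
    · -- k < n
      set N := n - k with hNdef
      have hN1 : 1 ≤ N := by omega
      have hn : n = N + k := by omega
      have hNn : N < n := by omega
      have h1 : PowerSeries.coeff (R := A) n (f ^ k)
          = ∑ j ∈ Finset.range ((φ ^ k).natDegree + 1),
              (φ ^ k).coeff j * PowerSeries.coeff (R := A) N (f ^ j) := by
        rw [hn]; exact hexp k N
      set D := (φ ^ k).natDegree with hD
      set M := max D N with hM
      -- the uniform termwise value
      have hL : ∀ j : ℕ, (N : A) * ((φ ^ k).coeff j * PowerSeries.coeff (R := A) N (f ^ j))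
          = if 1 ≤ j ∧ j ≤ N then (φ ^ k).coeff j * ((j : ℕ) : A) * (φ ^ N).coeff (N - j)
            else 0 := by
        intro j
        rcases Nat.eq_zero_or_pos j with rfl | hj
        · have hz : PowerSeries.coeff (R := A) N (f ^ 0) = 0 := by
            rw [pow_zero, PowerSeries.coeff_one, if_neg (by omega)]
          rw [hz, mul_zero, mul_zero, if_neg (by omega)]
        · by_cases hjN : j ≤ N
          · have hIH := IH N hNn j hj hjN
            rw [if_pos ⟨hj, hjN⟩]
            calc (N : A) * ((φ ^ k).coeff j * PowerSeries.coeff (R := A) N (f ^ j))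
                = (φ ^ k).coeff j * ((N : A) * PowerSeries.coeff (R := A) N (f ^ j)) := by ring
              _ = (φ ^ k).coeff j * ((j : A) * (φ ^ N).coeff (N - j)) := by rw [hIH]
              _ = _ := by ring
          · rw [hvanish j N (by omega), mul_zero, mul_zero, if_neg (by omega)]
      have step1 : (N : A) * PowerSeries.coeff (R := A) n (f ^ k)
          = (Polynomial.derivative (φ ^ k) * φ ^ N).coeff (N - 1) := by
        rw [h1, Finset.mul_sum]
        have e1 : ∑ j ∈ Finset.range (D + 1),
              (N : A) * ((φ ^ k).coeff j * PowerSeries.coeff (R := A) N (f ^ j))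
            = ∑ j ∈ Finset.range (M + 1),
              (N : A) * ((φ ^ k).coeff j * PowerSeries.coeff (R := A) N (f ^ j)) := by
          refine Finset.sum_subset (Finset.range_subset_range.mpr (by omega)) ?_
          intro j _ hj
          rw [Finset.mem_range, not_lt] at hj
          rw [Polynomial.coeff_eq_zero_of_natDegree_lt (by omega), zero_mul, mul_zero]
        have e2 : ∑ j ∈ Finset.range (M + 1),
              (N : A) * ((φ ^ k).coeff j * PowerSeries.coeff (R := A) N (f ^ j))
            = ∑ j ∈ Finset.range (N + 1),
              (N : A) * ((φ ^ k).coeff j * PowerSeries.coeff (R := A) N (f ^ j)) := by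
          symm
          refine Finset.sum_subset (Finset.range_subset_range.mpr (by omega)) ?_
          intro j _ hj
          rw [Finset.mem_range, not_lt] at hj
          rw [hL j, if_neg (by omega)]
        rw [e1, e2]
        have e3 : ∑ j ∈ Finset.range (N + 1),
              (N : A) * ((φ ^ k).coeff j * PowerSeries.coeff (R := A) N (f ^ j))
            = ∑ i ∈ Finset.range N,
                (φ ^ k).coeff (i + 1) * ((i + 1 : ℕ) : A) * (φ ^ N).coeff (N - 1 - i) := by
          rw [Finset.sum_range_succ']
          have hz : (N : A) * ((φ ^ k).coeff 0 * PowerSeries.coeff (R := A) N (f ^ 0)) = 0 := by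
            rw [hL 0, if_neg (by omega)]
          rw [hz, add_zero]
          refine Finset.sum_congr rfl fun i hi => ?_
          rw [Finset.mem_range] at hi
          rw [hL (i + 1), if_pos ⟨by omega, by omega⟩]
          congr 2
          omega
        rw [e3, Polynomial.coeff_mul, Finset.Nat.sum_antidiagonal_eq_sum_range_succ_mk]
        have hN' : (N - 1).succ = N := by omega
        rw [hN']
        refine Finset.sum_congr rfl fun i hi => ?_
        simp only [Polynomial.coeff_derivative]
        push_cast
        ring
      have pid : Polynomial.C ((N : ℕ) : A) * (Polynomial.derivative (φ ^ k) * φ ^ N)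
          = Polynomial.C ((k : ℕ) : A) * (Polynomial.derivative (φ ^ N) * φ ^ k) := by
        rw [Polynomial.derivative_pow, Polynomial.derivative_pow]
        have hpow : φ ^ (k - 1) * φ ^ N = φ ^ (N - 1) * φ ^ k := by
          rw [← pow_add, ← pow_add]; congr 1; omega
        linear_combination (Polynomial.C ((N : ℕ) : A) * Polynomial.C ((k : ℕ) : A) *
          Polynomial.derivative φ) * hpow
      have step2 : (N : A) * ((Polynomial.derivative (φ ^ k) * φ ^ N).coeff (N - 1))
          = (k : A) * ((Polynomial.derivative (φ ^ N) * φ ^ k).coeff (N - 1)) := by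
        have := congrArg (fun p => Polynomial.coeff p (N - 1)) pid
        simpa [Polynomial.coeff_C_mul] using this
      have key : (N : A) * ((n : A) * PowerSeries.coeff (R := A) n (f ^ k))
          = (N : A) * ((k : A) * (φ ^ n).coeff (n - k)) := by
        have hncast : (n : A) = (N : A) + (k : A) := by rw [hn]; push_cast; ring
        have hEsum : (Polynomial.derivative (φ ^ k) * φ ^ N).coeff (N - 1)
              + (Polynomial.derivative (φ ^ N) * φ ^ k).coeff (N - 1)
            = (N : A) * (φ ^ n).coeff (n - k) := by
          have hder : Polynomial.derivative (φ ^ N * φ ^ k)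
              = Polynomial.derivative (φ ^ N) * φ ^ k + Polynomial.derivative (φ ^ k) * φ ^ N := by
            rw [Polynomial.derivative_mul]; ring
          have hcoeff : (Polynomial.derivative (φ ^ N * φ ^ k)).coeff (N - 1)
              = (φ ^ N * φ ^ k).coeff N * (N : A) := by
            rw [Polynomial.coeff_derivative]
            have h' : N - 1 + 1 = N := by omega
            rw [h', Nat.cast_sub hN1]
            push_cast
            ring
          have hpowm : φ ^ N * φ ^ k = φ ^ n := by rw [← pow_add, ← hn]
          have hnk : n - k = N := rfl
          calc (Polynomial.derivative (φ ^ k) * φ ^ N).coeff (N - 1)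
                + (Polynomial.derivative (φ ^ N) * φ ^ k).coeff (N - 1)
              = (Polynomial.derivative (φ ^ N * φ ^ k)).coeff (N - 1) := by
                rw [hder, Polynomial.coeff_add]; ring
            _ = (φ ^ N * φ ^ k).coeff N * (N : A) := hcoeff
            _ = (N : A) * (φ ^ n).coeff (n - k) := by rw [hpowm, hnk]; ring
        calc (N : A) * ((n : A) * PowerSeries.coeff (R := A) n (f ^ k))
            = (n : A) * ((N : A) * PowerSeries.coeff (R := A) n (f ^ k)) := by ring
          _ = (n : A) * (Polynomial.derivative (φ ^ k) * φ ^ N).coeff (N - 1) := by rw [step1]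
          _ = (N : A) * (Polynomial.derivative (φ ^ k) * φ ^ N).coeff (N - 1)
              + (k : A) * (Polynomial.derivative (φ ^ k) * φ ^ N).coeff (N - 1) := by
                rw [hncast]; ring
          _ = (k : A) * ((Polynomial.derivative (φ ^ N) * φ ^ k).coeff (N - 1)
              + (Polynomial.derivative (φ ^ k) * φ ^ N).coeff (N - 1)) := by
                rw [step2]; ring
          _ = (k : A) * ((N : A) * (φ ^ n).coeff (n - k)) := by
                rw [← hEsum]; ring
          _ = (N : A) * ((k : A) * (φ ^ n).coeff (n - k)) := by ring
      have hNu : IsUnit ((N : ℕ) : A) := by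
        have h' : ((N : ℕ) : A) = algebraMap ℚ A ((N : ℕ) : ℚ) := by rw [map_natCast]
        rw [h']
        exact (isUnit_iff_ne_zero.mpr (by exact_mod_cast (by omega : N ≠ 0))).map _
      exact hNu.mul_left_cancel key
-- inner ℚ-polynomial coefficient computation
lemma q_coeff (m a : ℕ) (hm : 1 ≤ m) (ha : a ≤ m) :
    ((1 + Polynomial.X : Polynomial ℚ) ^ (2 * m)
        * ((1 + Polynomial.X + Polynomial.X ^ 2) ^ a * Polynomial.X ^ (m - a))).coeff (m - 1)
      = ∑ j ∈ Finset.range (a + 1),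
          (a.choose j : ℚ) * ((2 * m + a - j).choose (2 * m + j + 1) : ℚ) := by
  have hu : (1 + Polynomial.X + Polynomial.X ^ 2 : Polynomial ℚ)
      = Polynomial.X ^ 2 + (1 + Polynomial.X) := by ring
  rw [hu, add_pow (Polynomial.X^2) (1 + Polynomial.X) a]
  rw [Finset.sum_mul, Finset.mul_sum]
  rw [Polynomial.finset_sum_coeff]
  refine Finset.sum_congr rfl fun j hj => ?_
  rw [Finset.mem_range] at hj
  have hterm : (1 + Polynomial.X : Polynomial ℚ) ^ (2 * m)
        * ((Polynomial.X ^ 2) ^ j * (1 + Polynomial.X) ^ (a - j) * (a.choose j : Polynomial ℚ)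
            * Polynomial.X ^ (m - a))
      = Polynomial.C ((a.choose j : ℚ)) * ((1 + Polynomial.X) ^ (2 * m + (a - j))
            * Polynomial.X ^ (m - a + 2 * j)) := by
    rw [pow_add, ← pow_mul, pow_add, Polynomial.C_eq_natCast]
    ring
  rw [hterm, Polynomial.coeff_C_mul, Polynomial.coeff_mul_X_pow']
  by_cases hcond : m - a + 2 * j ≤ m - 1
  · rw [if_pos hcond]
    rw [Polynomial.coeff_one_add_X_pow]
    congr 1
    have h1 : m - 1 - (m - a + 2 * j) = a - 1 - 2 * j := by omega
    rw [h1]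
    have h2 : 2 * m + j + 1 ≤ 2 * m + (a - j) := by omega
    have h3 : (2 * m + (a - j)) - (2 * m + j + 1) = a - 1 - 2 * j := by omega
    rw [show 2 * m + a - j = 2 * m + (a - j) by omega]
    rw [← h3]
    exact_mod_cast congrArg Nat.cast (Nat.choose_symm h2)
  · rw [if_neg hcond, mul_zero]
    have h4 : 2 * m + a - j < 2 * m + j + 1 := by omega
    rw [Nat.choose_eq_zero_of_lt h4]
    push_cast
    ring

abbrev xq : PowerSeries ℚ := PowerSeries.X

def φp : Polynomial (PowerSeries ℚ) :=
  Polynomial.C xq * (1 + Polynomial.X) ^ 2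
    * (Polynomial.C xq * (1 + Polynomial.X) ^ 2 - (Polynomial.C xq - 1) * Polynomial.X)

lemma phi_expand : φp ^ m = ∑ k ∈ Finset.range (m + 1),
    Polynomial.C (xq ^ (m + k) * ((m.choose k : ℕ) : PowerSeries ℚ))
      * Polynomial.map (PowerSeries.C (R := ℚ))
          ((1 + Polynomial.X) ^ (2 * m)
            * ((1 + Polynomial.X + Polynomial.X ^ 2) ^ k * Polynomial.X ^ (m - k))) := by
  have hphi : φp = Polynomial.C xq * (1 + Polynomial.X) ^ 2
      * (Polynomial.C xq * (1 + Polynomial.X + Polynomial.X ^ 2) + Polynomial.X) := by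
    unfold φp; ring
  rw [hphi, mul_pow, mul_pow,
    add_pow (Polynomial.C xq * (1 + Polynomial.X + Polynomial.X ^ 2)) Polynomial.X m,
    Finset.mul_sum]
  refine Finset.sum_congr rfl fun k hk => ?_
  have hmap : Polynomial.map (PowerSeries.C (R := ℚ))
      ((1 + Polynomial.X) ^ (2 * m)
        * ((1 + Polynomial.X + Polynomial.X ^ 2) ^ k * Polynomial.X ^ (m - k)))
      = (1 + Polynomial.X) ^ (2 * m)
        * ((1 + Polynomial.X + Polynomial.X ^ 2) ^ k * Polynomial.X ^ (m - k)) := by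
    simp [Polynomial.map_mul, Polynomial.map_pow, Polynomial.map_add, Polynomial.map_one,
      Polynomial.map_X]
  rw [hmap]
  rw [Polynomial.C_mul, ← Polynomial.C_pow, pow_add, Polynomial.C_mul, Polynomial.C_eq_natCast]
  rw [mul_pow, ← Polynomial.C_pow, ← pow_mul]
  ring

lemma delta_term (n : ℕ) (c : ℚ) (k : ℕ) :
    PowerSeries.coeff (R := ℚ) n ((PowerSeries.C (R := ℚ) c) * xq ^ k)
      = if n = k then c else 0 := by
  rw [PowerSeries.coeff_mul_X_pow', PowerSeries.coeff_C]
  split_ifs <;> first | rfl | omega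

lemma phi_pow_coeff (n m : ℕ) (hm : 1 ≤ m) :
    PowerSeries.coeff (R := ℚ) n ((φp ^ m).coeff (m - 1))
      = (m.choose (n - m) : ℚ) * ∑ j ∈ Finset.range (n - m + 1),
          ((n - m).choose j : ℚ) * ((n + m - j).choose (2 * m + j + 1) : ℚ) := by
  have key : PowerSeries.coeff (R := ℚ) n ((φp ^ m).coeff (m - 1))
      = ∑ k ∈ Finset.range (m + 1), (if n = m + k then (m.choose k : ℚ)
          * (((1 + Polynomial.X) ^ (2 * m) * ((1 + Polynomial.X + Polynomial.X ^ 2) ^ k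
              * Polynomial.X ^ (m - k)) : Polynomial ℚ)).coeff (m - 1) else 0) := by
    rw [phi_expand, Polynomial.finset_sum_coeff, map_sum]
    refine Finset.sum_congr rfl fun k hk => ?_
    rw [Polynomial.coeff_C_mul, Polynomial.coeff_map]
    have hcast : ((m.choose k : ℕ) : PowerSeries ℚ) = PowerSeries.C (R := ℚ) ((m.choose k : ℕ) : ℚ) := by
      rw [map_natCast]
    rw [hcast]
    have hre : xq ^ (m + k) * PowerSeries.C (R := ℚ) ((m.choose k : ℕ) : ℚ)
          * PowerSeries.C (R := ℚ) ((((1 + Polynomial.X) ^ (2 * m)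
            * ((1 + Polynomial.X + Polynomial.X ^ 2) ^ k
              * Polynomial.X ^ (m - k)) : Polynomial ℚ)).coeff (m - 1))
        = PowerSeries.C (R := ℚ) (((m.choose k : ℕ) : ℚ)
            * (((1 + Polynomial.X) ^ (2 * m) * ((1 + Polynomial.X + Polynomial.X ^ 2) ^ k
              * Polynomial.X ^ (m - k)) : Polynomial ℚ)).coeff (m - 1)) * xq ^ (m + k) := by
      rw [map_mul]; ring
    rw [hre, delta_term]
  rw [key]
  have delta_sum : ∀ V : ℕ → ℚ, (∑ k ∈ Finset.range (m + 1), if n = m + k then V k else 0)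
      = if m ≤ n ∧ n - m ≤ m then V (n - m) else 0 := by
    intro V
    by_cases h : m ≤ n ∧ n - m ≤ m
    · rw [if_pos h]
      have hco : ∀ k ∈ Finset.range (m + 1),
          (if n = m + k then V k else 0) = (if k = n - m then V k else 0) := by
        intro k hk
        rw [Finset.mem_range] at hk
        by_cases hk2 : k = n - m
        · rw [if_pos (by omega), if_pos hk2]
        · rw [if_neg (by omega), if_neg hk2]
      rw [Finset.sum_congr rfl hco, Finset.sum_ite_eq' (Finset.range (m + 1)) (n - m) V,
        if_pos (Finset.mem_range.mpr (by omega))]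
    · rw [if_neg h]
      refine Finset.sum_eq_zero fun k hk => if_neg ?_
      rw [Finset.mem_range] at hk
      omega
  rw [delta_sum]
  by_cases h : m ≤ n ∧ n - m ≤ m
  · rw [if_pos h]
    set a := n - m with hadef
    have han : n = m + a := by omega
    rw [q_coeff m a hm h.2]
    congr 1
    refine Finset.sum_congr rfl fun j hj => ?_
    rw [show 2 * m + a - j = n + m - j by omega]
  · rw [if_neg h]
    by_cases hc1 : n < m
    · have h0 : n - m = 0 := by omega
      rw [h0, Finset.sum_range_one,
        Nat.choose_eq_zero_of_lt (show n + m - 0 < 2 * m + 1 by omega)]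
      simp
    · rw [Nat.choose_eq_zero_of_lt (show m < n - m by omega)]
      simp

theorem stmt1 (B : MvPowerSeries (Fin 2) ℚ)
    (hB : B = 1 + (MvPowerSeries.X 0) * (MvPowerSeries.X 1) * B ^ 2 *
      ((MvPowerSeries.X 0) * B ^ 2 - ((MvPowerSeries.X 0) - 1) * (B - 1))) :
    (∀ m : ℕ, MvPowerSeries.coeff (R := ℚ) (Finsupp.single (1 : Fin 2) m) B
        = if m = 0 then 1 else 0) ∧
    (∀ n : ℕ, 1 ≤ n → MvPowerSeries.coeff (R := ℚ) (Finsupp.single (0 : Fin 2) n) B = 0) ∧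
    (∀ n m : ℕ, 1 ≤ n → 1 ≤ m →
      MvPowerSeries.coeff (R := ℚ)
          (Finsupp.single (0 : Fin 2) n + Finsupp.single (1 : Fin 2) m) B
        = (1 / (m : ℚ)) * (Nat.choose m (n - m)) *
          ∑ j ∈ Finset.range (n - m + 1),
            (Nat.choose (n - m) j : ℚ) * (Nat.choose (n + m - j) (2 * m + j + 1))) := by
  letI : Algebra (PowerSeries ℚ) (PowerSeries (PowerSeries ℚ)) := MvPowerSeries.instAlgebra
  have hf := congrArg T hB
  simp only [map_add, map_one, map_mul, map_sub, map_pow, T_X0, T_X1] at hf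
  have haev : Polynomial.aeval (T B - 1) φp
      = PowerSeries.C (R := PowerSeries ℚ) PowerSeries.X * (T B) ^ 2
        * (PowerSeries.C (R := PowerSeries ℚ) PowerSeries.X * (T B) ^ 2
          - (PowerSeries.C (R := PowerSeries ℚ) PowerSeries.X - 1) * (T B - 1)) := by
    unfold φp
    simp only [map_mul, map_sub, map_add, map_pow, map_one, Polynomial.aeval_X,
      Polynomial.aeval_C, ← PowerSeries.C_eq_algebraMap]
    ring
  have hg : T B - 1 = PowerSeries.X * Polynomial.aeval (T B - 1) φp := by
    rw [haev]; linear_combination hf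
  -- coefficient 0 in y of T B is 1
  have hTB0 : PowerSeries.coeff (R := PowerSeries ℚ) 0 (T B) = 1 := by
    have hTB : T B = 1 + PowerSeries.X * Polynomial.aeval (T B - 1) φp := by
      linear_combination hg
    rw [hTB, map_add, ← pow_one (PowerSeries.X : PowerSeries (PowerSeries ℚ)),
      PowerSeries.coeff_X_pow_mul', if_neg (by omega)]
    simp
  -- y-coefficients for m ≥ 1 are divisible by x
  have hdvd : ∀ m : ℕ, 1 ≤ m →
      PowerSeries.coeff (R := PowerSeries ℚ) m (T B)
        = PowerSeries.coeff (R := PowerSeries ℚ) (m - 1) (Polynomial.aeval (T B - 1) φp) := by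
    intro m hm
    have hTB : T B = 1 + PowerSeries.X * Polynomial.aeval (T B - 1) φp := by
      linear_combination hg
    have h2 := congrArg (PowerSeries.coeff (R := PowerSeries ℚ) m) hTB
    rw [map_add, PowerSeries.coeff_one, if_neg (by omega), zero_add,
      ← pow_one (PowerSeries.X : PowerSeries (PowerSeries ℚ)),
      PowerSeries.coeff_X_pow_mul', if_pos (by omega)] at h2
    exact h2
  -- Lagrange inversion
  have hlag : ∀ m : ℕ, 1 ≤ m →
      ((m : ℕ) : PowerSeries ℚ) * PowerSeries.coeff (R := PowerSeries ℚ) m (T B - 1)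
        = (φp ^ m).coeff (m - 1) := by
    intro m hm
    have hl := lagrange φp (T B - 1) hg m 1 le_rfl hm
    rw [pow_one, Nat.cast_one, one_mul] at hl
    exact hl
  have hmain : ∀ n m : ℕ, 1 ≤ m →
      (m : ℚ) * MvPowerSeries.coeff (R := ℚ) (Finsupp.single 0 n + Finsupp.single 1 m) B
        = (m.choose (n - m) : ℚ) * ∑ j ∈ Finset.range (n - m + 1),
            ((n - m).choose j : ℚ) * ((n + m - j).choose (2 * m + j + 1) : ℚ) := by
    intro n m hm
    have h1 := congrArg (PowerSeries.coeff (R := ℚ) n) (hlag m hm)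
    rw [show ((m : ℕ) : PowerSeries ℚ) = PowerSeries.C (R := ℚ) ((m : ℕ) : ℚ) from
      (map_natCast _ m).symm, PowerSeries.coeff_C_mul] at h1
    rw [map_sub, PowerSeries.coeff_one, if_neg (by omega), sub_zero] at h1
    rw [T_coeff] at h1
    rw [phi_pow_coeff n m hm] at h1
    exact h1
  refine ⟨?_, ?_, ?_⟩
  · intro m
    have e : (Finsupp.single (1 : Fin 2) m : Fin 2 →₀ ℕ)
        = Finsupp.single 0 0 + Finsupp.single 1 m := by simp
    rw [e, ← T_coeff]
    rcases Nat.eq_zero_or_pos m with rfl | hm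
    · rw [hTB0]
      simp
    · rw [if_neg (by omega)]
      rw [hdvd m hm]
      have haev2 : Polynomial.aeval (T B - 1) φp
          = PowerSeries.C (R := PowerSeries ℚ) PowerSeries.X *
            Polynomial.aeval (T B - 1) ((1 + Polynomial.X) ^ 2
              * (Polynomial.C xq * (1 + Polynomial.X) ^ 2 - (Polynomial.C xq - 1)
                * Polynomial.X)) := by
        unfold φp
        rw [show Polynomial.C xq * (1 + Polynomial.X) ^ 2
            * (Polynomial.C xq * (1 + Polynomial.X) ^ 2 - (Polynomial.C xq - 1) * Polynomial.X)
          = Polynomial.C xq * ((1 + Polynomial.X) ^ 2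
            * (Polynomial.C xq * (1 + Polynomial.X) ^ 2 - (Polynomial.C xq - 1)
              * Polynomial.X)) by ring]
        rw [map_mul, Polynomial.aeval_C, ← PowerSeries.C_eq_algebraMap]
      rw [haev2, PowerSeries.coeff_C_mul]
      rw [PowerSeries.coeff_zero_eq_constantCoeff, map_mul]
      simp [PowerSeries.constantCoeff_X]
  · intro n hn
    have e : (Finsupp.single (0 : Fin 2) n : Fin 2 →₀ ℕ)
        = Finsupp.single 0 n + Finsupp.single 1 0 := by simp
    rw [e, ← T_coeff, hTB0, PowerSeries.coeff_one, if_neg (by omega)]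
  · intro n m hn hm
    have hm0 : (m : ℚ) ≠ 0 := by exact_mod_cast (by omega : m ≠ 0)
    refine mul_left_cancel₀ hm0 ?_
    rw [hmain n m hm]
    field_simp

end
end
end

section
/- For every integer m ≥ 1, there is a bijection between the set of inversion sequences (of any length) avoiding both patterns 102 and 000 with dist equal to m and rank equal to 0, and the set of inversion sequences (of any length) avoiding both patterns 102 and 000 with dist equal to m and exactly one index p with e_p = max(e); in particular these two sets have the same cardinality. Explicitly, if e has rank 0 and its maximum occurs twice, deleting the entry at position prmx(e) yields the corresponding sequence with a unique maximum, and if the maximum of e occurs once, e corresponds to itself. -/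
/-- `l` is an inversion sequence: the `i`-th entry (0-indexed) is at most `i`
(in particular every entry is a nonnegative integer). -/
def IsInvSeq (l : List ℕ) : Prop :=
  ∀ i < l.length, l.getD i 0 ≤ i

/-- `l` contains the pattern 102: there are indices `i < j < k` with
`l_j < l_i < l_k`. -/
def Contains102 (l : List ℕ) : Prop :=
  ∃ i j k, i < j ∧ j < k ∧ k < l.length ∧
    l.getD j 0 < l.getD i 0 ∧ l.getD i 0 < l.getD k 0

/-- `l` contains the pattern 000: there are indices `i < j < k` with
`l_i = l_j = l_k`. -/
def Contains000 (l : List ℕ) : Prop :=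
  ∃ i j k, i < j ∧ j < k ∧ k < l.length ∧
    l.getD i 0 = l.getD j 0 ∧ l.getD j 0 = l.getD k 0

/-- The maximum entry of `l` (`0` for the empty list). -/
def listMax (l : List ℕ) : ℕ := l.foldr max 0

/-- The 0-based index of the first descent of `l`, with the convention that
the entry following the last one is `-1`.  The 1-indexed statistic `prmx`
of a nonempty list equals `prmx0 + 1`. -/
def prmx0 : List ℕ → ℕ
  | [] => 0
  | [_] => 0
  | a :: b :: t => if b < a then 0 else prmx0 (b :: t) + 1

/-- `rank(e) = prmx(e) − max(e) − 1 = prmx0(e) − max(e)`; for a `102`-avoiding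
inversion sequence this is a nonnegative integer, and the empty sequence has
rank `0`. -/
def invRank (l : List ℕ) : ℕ := prmx0 l - listMax l


section AuxLemmas

open List

lemma le_listMax {a : ℕ} {l : List ℕ} (h : a ∈ l) : a ≤ listMax l := by
  induction l with
  | nil => simp at h
  | cons b t ih =>
    rcases List.mem_cons.1 h with rfl | h
    · exact le_max_left _ _
    · exact le_trans (ih h) (le_max_right _ _)

lemma listMax_le {b : ℕ} {l : List ℕ} (h : ∀ a ∈ l, a ≤ b) : listMax l ≤ b := by
  induction l with
  | nil => exact Nat.zero_le _
  | cons c t ih =>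
    exact max_le (h c List.mem_cons_self) (ih fun a ha => h a (List.mem_cons_of_mem _ ha))

lemma listMax_mem {l : List ℕ} (h : l ≠ []) : listMax l ∈ l := by
  induction l with
  | nil => simp at h
  | cons b t ih =>
    rcases eq_or_ne t [] with rfl | ht
    · simp [listMax]
    · show max b (listMax t) ∈ _
      rcases le_total b (listMax t) with h' | h'
      · rw [max_eq_right h']; exact List.mem_cons_of_mem _ (ih ht)
      · rw [max_eq_left h']; exact List.mem_cons_self

lemma getD_mem {l : List ℕ} {i : ℕ} (h : i < l.length) : l.getD i 0 ∈ l := by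
  rw [List.getD_eq_getElem _ _ h]; exact List.getElem_mem _

lemma prmx0_lt_length {l : List ℕ} (h : l ≠ []) : prmx0 l < l.length := by
  induction l with
  | nil => simp at h
  | cons a t ih =>
    cases t with
    | nil => simp [prmx0]
    | cons b t' =>
      show (if b < a then 0 else prmx0 (b :: t') + 1) < _
      split
      · simp
      · simpa using ih (by simp)

lemma prmx0_mono {l : List ℕ} : ∀ i, i < prmx0 l → l.getD i 0 ≤ l.getD (i+1) 0 := by
  induction l with
  | nil => simp [prmx0]
  | cons a t ih =>
    cases t with
    | nil => simp [prmx0]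
    | cons b t' =>
      intro i hi
      show (a :: b :: t').getD i 0 ≤ _
      by_cases hba : b < a
      · simp [prmx0, hba] at hi
      · have hp : prmx0 (a :: b :: t') = prmx0 (b :: t') + 1 := by simp [prmx0, hba]
        rw [hp] at hi
        cases i with
        | zero => simpa using not_lt.1 hba
        | succ i' =>
          have := ih i' (by omega)
          simpa using this

lemma prmx0_descent {l : List ℕ} (h : prmx0 l + 1 < l.length) :
    l.getD (prmx0 l + 1) 0 < l.getD (prmx0 l) 0 := by
  induction l with
  | nil => simp at h
  | cons a t ih =>
    cases t with
    | nil => simp [prmx0] at h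
    | cons b t' =>
      by_cases hba : b < a
      · simpa [prmx0, hba] using hba
      · have hp : prmx0 (a :: b :: t') = prmx0 (b :: t') + 1 := by simp [prmx0, hba]
        rw [hp] at h ⊢
        have := ih (by simpa using h)
        simpa using this

lemma prmx0_eq_of {l : List ℕ} {p : ℕ} (hp : p < l.length)
    (hmono : ∀ i < p, l.getD i 0 ≤ l.getD (i+1) 0)
    (hd : p + 1 = l.length ∨ l.getD (p+1) 0 < l.getD p 0) : prmx0 l = p := by
  induction l generalizing p with
  | nil => simp at hp
  | cons a t ih =>
    cases t with
    | nil =>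
      simp only [List.length_singleton] at hp
      simp [prmx0]
      omega
    | cons b t' =>
      cases p with
      | zero =>
        rcases hd with hd | hd
        · simp at hd
        · simp at hd
          simp [prmx0, hd]
      | succ p' =>
        have h0 := hmono 0 (Nat.succ_pos _)
        simp at h0
        have hba : ¬ b < a := not_lt.2 h0
        have : prmx0 (b :: t') = p' := by
          apply ih
          · simpa using hp
          · intro i hi
            have := hmono (i+1) (by omega)
            simpa using this
          · rcases hd with hd | hd
            · left; simpa using hd
            · right; simpa using hd
        simp [prmx0, hba, this]

lemma prmx0_prefix_le {l : List ℕ} {i j : ℕ} (hij : i ≤ j) (hj : j ≤ prmx0 l) :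
    l.getD i 0 ≤ l.getD j 0 := by
  induction j with
  | zero =>
    have : i = 0 := Nat.le_zero.1 hij
    simp [this]
  | succ j' ih =>
    rcases Nat.eq_or_lt_of_le hij with rfl | hij'
    · exact le_refl _
    · exact le_trans (ih (by omega) (by omega)) (prmx0_mono j' (by omega))

lemma two_le_count_of {l : List ℕ} {i j x : ℕ} (hij : i < j) (hj : j < l.length)
    (hi' : l.getD i 0 = x) (hj' : l.getD j 0 = x) : 2 ≤ l.count x := by
  have h1 : x ∈ l.take j := by
    rw [List.mem_iff_getElem]
    exact ⟨i, by simp [hij]; omega,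
      by rw [List.getElem_take]; rw [List.getD_eq_getElem _ _ (by omega)] at hi'; exact hi'⟩
  have h2 : x ∈ l.drop j := by
    rw [List.mem_iff_getElem]
    refine ⟨0, by simpa using hj, ?_⟩
    rw [List.getElem_drop]
    rw [List.getD_eq_getElem _ _ (by omega)] at hj'
    simpa using hj'
  calc 2 = 1 + 1 := rfl
  _ ≤ (l.take j).count x + (l.drop j).count x :=
      Nat.add_le_add (List.count_pos_iff.2 h1) (List.count_pos_iff.2 h2)
  _ = l.count x := by rw [← List.count_append, List.take_append_drop]

lemma three_le_count_of {l : List ℕ} {i j k x : ℕ} (hij : i < j) (hjk : j < k)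
    (hk : k < l.length) (hi' : l.getD i 0 = x) (hj' : l.getD j 0 = x) (hk' : l.getD k 0 = x) :
    3 ≤ l.count x := by
  have hlen : (l.take k).length = k := by simp; omega
  have htk : ∀ a, a < k → (l.take k).getD a 0 = l.getD a 0 := by
    intro a ha
    rw [List.getD_eq_getElem _ _ (by omega), List.getD_eq_getElem _ _ (by omega : a < l.length)]
    exact List.getElem_take
  have h2 : 2 ≤ (l.take k).count x :=
    two_le_count_of hij (by omega) (by rw [htk i (by omega)]; exact hi')
      (by rw [htk j hjk]; exact hj')
  have h1 : x ∈ l.drop k := by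
    rw [List.mem_iff_getElem]
    refine ⟨0, by simpa using hk, ?_⟩
    rw [List.getElem_drop]
    rw [List.getD_eq_getElem _ _ (by omega)] at hk'
    simpa using hk'
  calc 3 = 2 + 1 := rfl
  _ ≤ (l.take k).count x + (l.drop k).count x := Nat.add_le_add h2 (List.count_pos_iff.2 h1)
  _ = l.count x := by rw [← List.count_append, List.take_append_drop]

lemma exists_pair_of_two_le_count {l : List ℕ} {x : ℕ} (h : 2 ≤ l.count x) :
    ∃ i j, i < j ∧ j < l.length ∧ l.getD i 0 = x ∧ l.getD j 0 = x := by
  have hs : List.replicate 2 x <+ l := List.replicate_sublist_iff.2 h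
  obtain ⟨is, his, hp⟩ := List.sublist_eq_map_getElem hs
  have hlen : is.length = 2 := by
    have := congrArg List.length his; simpa using this.symm
  obtain ⟨⟨i, hi⟩, ⟨j, hj⟩, rfl⟩ := List.length_eq_two.1 hlen
  simp [List.replicate] at his
  refine ⟨i, j, ?_, hj, ?_, ?_⟩
  · simpa using hp
  · rw [List.getD_eq_getElem _ _ hi]; exact his.1.symm
  · rw [List.getD_eq_getElem _ _ hj]; exact his.2.symm

lemma exists_triple_of_three_le_count {l : List ℕ} {x : ℕ} (h : 3 ≤ l.count x) :
    ∃ i j k, i < j ∧ j < k ∧ k < l.length ∧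
      l.getD i 0 = x ∧ l.getD j 0 = x ∧ l.getD k 0 = x := by
  have hs : List.replicate 3 x <+ l := List.replicate_sublist_iff.2 h
  obtain ⟨is, his, hp⟩ := List.sublist_eq_map_getElem hs
  have hlen : is.length = 3 := by
    have := congrArg List.length his; simpa using this.symm
  obtain ⟨⟨i, hi⟩, ⟨j, hj⟩, ⟨k, hk⟩, rfl⟩ := List.length_eq_three.1 hlen
  simp [List.replicate] at his
  obtain ⟨h1, h2⟩ := (by simpa using hp : (i < j ∧ i < k) ∧ j < k)
  refine ⟨i, j, k, h1.1, h2, hk, ?_, ?_, ?_⟩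
  · rw [List.getD_eq_getElem _ _ hi]; exact his.1.symm
  · rw [List.getD_eq_getElem _ _ hj]; exact his.2.1.symm
  · rw [List.getD_eq_getElem _ _ hk]; exact his.2.2.symm

lemma contains000_iff {l : List ℕ} : Contains000 l ↔ ∃ x, 3 ≤ l.count x := by
  constructor
  · rintro ⟨i, j, k, hij, hjk, hk, h1, h2⟩
    exact ⟨l.getD i 0, three_le_count_of hij hjk hk rfl h1.symm (h2.symm.trans h1.symm)⟩
  · rintro ⟨x, hx⟩
    obtain ⟨i, j, k, hij, hjk, hk, h1, h2, h3⟩ := exists_triple_of_three_le_count hx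
    exact ⟨i, j, k, hij, hjk, hk, h1.trans h2.symm, h2.trans h3.symm⟩

lemma contains102_of_sublist {l' l : List ℕ} (hs : l' <+ l) (h : Contains102 l') :
    Contains102 l := by
  obtain ⟨i, j, k, hij, hjk, hk, h1, h2⟩ := h
  obtain ⟨is, rfl, hp⟩ := List.sublist_eq_map_getElem hs
  have hlen : (is.map fun x : Fin l.length => l[x]).length = is.length := by simp
  rw [hlen] at hk
  have hmono := List.pairwise_iff_getElem.1 hp
  have hv : ∀ a (ha : a < is.length),
      (is.map fun x : Fin l.length => l[x]).getD a 0 = l.getD (is[a] : ℕ) 0 := by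
    intro a ha
    rw [List.getD_eq_getElem _ _ (by simpa using ha),
        List.getD_eq_getElem _ _ (is[a]).2]
    simp
  refine ⟨is[i], is[j], is[k], hmono _ _ (by omega) (by omega) hij,
    hmono _ _ (by omega) (by omega) hjk, (is[k]).2, ?_, ?_⟩
  · rw [← hv i (by omega), ← hv j (by omega)]; exact h1
  · rw [← hv i (by omega), ← hv k (by omega)]; exact h2

lemma getD_prmx0 {l : List ℕ} (hne : l ≠ []) (h102 : ¬ Contains102 l) :
    l.getD (prmx0 l) 0 = listMax l := by
  set p := prmx0 l with hp
  have hplt := prmx0_lt_length hne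
  rw [← hp] at hplt
  refine le_antisymm (le_listMax (getD_mem hplt)) (listMax_le ?_)
  intro a ha
  obtain ⟨k, hk, rfl⟩ := List.mem_iff_getElem.1 ha
  rw [← List.getD_eq_getElem l 0 hk]
  rcases le_or_gt k p with hkp | hkp
  · exact prmx0_prefix_le hkp le_rfl
  · by_contra hgt
    push_neg at hgt
    have hp1 : p + 1 < l.length := by omega
    have hdesc := prmx0_descent (l := l)
    rw [← hp] at hdesc
    replace hdesc := hdesc hp1
    rcases eq_or_lt_of_le (show p + 1 ≤ k by omega) with rfl | hk2
    · omega
    · exact h102 ⟨p, p+1, k, by omega, hk2, hk, hdesc, hgt⟩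

lemma getD_eraseIdx' {l : List ℕ} {p i : ℕ} (hp : p < l.length) (hi : i < l.length - 1) :
    (l.eraseIdx p).getD i 0 = if i < p then l.getD i 0 else l.getD (i+1) 0 := by
  have hlen : (l.eraseIdx p).length = l.length - 1 := by
    rw [List.length_eraseIdx]; simp [hp]
  rw [List.getD_eq_getElem _ _ (by omega), List.getElem_eraseIdx]
  split
  · rw [List.getD_eq_getElem _ _ (by omega)]
  · rw [List.getD_eq_getElem _ _ (by omega)]

lemma getD_insertIdx' {l : List ℕ} {a p i : ℕ} (hp : p ≤ l.length) (hi : i < l.length + 1) :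
    (l.insertIdx p a).getD i 0 =
      if i < p then l.getD i 0 else if i = p then a else l.getD (i-1) 0 := by
  have hlen : (l.insertIdx p a).length = l.length + 1 := List.length_insertIdx_of_le_length hp _
  rcases lt_trichotomy i p with h | rfl | h
  · rw [if_pos h, List.getD_eq_getElem _ _ (by omega), List.getD_eq_getElem _ _ (by omega)]
    exact List.getElem_insertIdx_of_lt h (by omega)
  · rw [if_neg (lt_irrefl _), if_pos rfl, List.getD_eq_getElem _ _ (by omega)]
    exact List.getElem_insertIdx_self (by omega)
  · rw [if_neg (by omega), if_neg (by omega)]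
    obtain ⟨k, rfl⟩ : ∃ k, i = p + k + 1 := ⟨i - p - 1, by omega⟩
    have hidx : p + k + 1 - 1 = p + k := by omega
    rw [hidx, List.getD_eq_getElem _ _ (by omega),
      List.getD_eq_getElem _ _ (by omega : p + k < l.length)]
    exact List.getElem_insertIdx_add_succ l a p k (by omega)

lemma count_eraseIdx' {l : List ℕ} {p x : ℕ} (hp : p < l.length) :
    (l.eraseIdx p).count x = l.count x - (if l.getD p 0 = x then 1 else 0) := by
  have hdrop : l.drop p = l.getD p 0 :: l.drop (p+1) := by
    rw [List.getD_eq_getElem _ _ hp]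
    exact (List.getElem_cons_drop hp).symm
  have hl : l.count x
      = (l.take p).count x + ((l.getD p 0 :: l.drop (p+1)).count x) := by
    conv_lhs => rw [← List.take_append_drop p l, hdrop]
    rw [List.count_append]
  rw [List.eraseIdx_eq_take_drop_succ, List.count_append, hl, List.count_cons]
  simp only [List.getD] at *
  rcases eq_or_ne (l[p]?.getD 0) x with h | h <;> simp [h]

lemma count_insertIdx' {l : List ℕ} {a p x : ℕ} (hp : p ≤ l.length) :
    (l.insertIdx p a).count x = l.count x + (if a = x then 1 else 0) := by
  rw [(List.perm_insertIdx a l hp).count_eq, List.count_cons]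
  simp

lemma insertIdx_eraseIdx_self : ∀ (l : List ℕ) (i : ℕ), i < l.length →
    (l.eraseIdx i).insertIdx i (l.getD i 0) = l
  | [], i, h => by simp at h
  | a :: t, 0, _ => by simp
  | a :: t, i+1, h => by
    simp only [List.eraseIdx_cons_succ, List.getD_cons_succ, List.insertIdx_succ_cons]
    rw [insertIdx_eraseIdx_self t i (by simpa using h)]

end AuxLemmas

/-- structural consequences for a rank-0 sequence whose maximum occurs twice -/
lemma erase_case {e : List ℕ} (hinv : IsInvSeq e) (h102 : ¬Contains102 e)
    (h000 : ¬Contains000 e) (hne : e ≠ [])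
    (hrk : invRank e = 0) (hcnt : e.count (listMax e) = 2) :
    prmx0 e = listMax e ∧ listMax e + 1 < e.length ∧
    (IsInvSeq (e.eraseIdx (listMax e)) ∧ ¬Contains102 (e.eraseIdx (listMax e)) ∧
     ¬Contains000 (e.eraseIdx (listMax e)) ∧
     (e.eraseIdx (listMax e)).toFinset = e.toFinset ∧
     listMax (e.eraseIdx (listMax e)) = listMax e ∧
     (e.eraseIdx (listMax e)).count (listMax e) = 1 ∧
     e.eraseIdx (listMax e) ≠ [] ∧
     (e.eraseIdx (listMax e)).getD (listMax e) 0 < listMax e ∧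
     (e.eraseIdx (listMax e)).insertIdx (listMax e) (listMax e) = e) := by
  set M := listMax e with hM
  -- prmx0 e = M
  have hpmax : e.getD (prmx0 e) 0 = M := getD_prmx0 hne h102
  have hple := hinv (prmx0 e) (prmx0_lt_length hne)
  have hMle : M ≤ prmx0 e := by rw [← hpmax]; exact hple
  have hrk' : prmx0 e ≤ M := by unfold invRank at hrk; omega
  have hpM : prmx0 e = M := le_antisymm hrk' hMle
  -- M + 1 < e.length
  obtain ⟨i, j, hij, hj, hi', hj'⟩ :=
    exists_pair_of_two_le_count (l := e) (x := M) (by omega)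
  have hiM : M ≤ i := hi' ▸ hinv i (by omega)
  have hM1 : M + 1 < e.length := by omega
  have hMlt : M < e.length := by omega
  set g := e.eraseIdx M with hg
  have hglen : g.length = e.length - 1 := by
    rw [hg, List.length_eraseIdx]; simp [hMlt]
  have hget : ∀ i', i' < g.length →
      g.getD i' 0 = if i' < M then e.getD i' 0 else e.getD (i'+1) 0 := by
    intro i' hi'
    exact getD_eraseIdx' hMlt (by omega)
  have heM : e.getD M 0 = M := by
    conv_lhs => rw [← hpM]
    exact hpmax
  have hcnt' : g.count M = 1 := by
    rw [hg, count_eraseIdx' hMlt, heM]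
    simp [← hM, hcnt]
  have hsubl : List.Sublist g e := List.eraseIdx_sublist _ _
  have hgmax : listMax g = M := by
    refine le_antisymm (listMax_le fun a ha => ?_) (le_listMax ?_)
    · exact hM ▸ le_listMax (hsubl.subset ha)
    · exact List.count_pos_iff.1 (by omega)
  refine ⟨hpM, hM1, ?_, ?_, ?_, ?_, hgmax, hcnt', ?_, ?_, ?_⟩
  · -- IsInvSeq g
    intro i' hi'
    rw [hget i' hi']
    split
    · exact hinv i' (by omega)
    · have h1 : e.getD (i'+1) 0 ≤ M := hM ▸ le_listMax (getD_mem (by omega))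
      omega
  · exact fun h => h102 (contains102_of_sublist hsubl h)
  · intro h
    obtain ⟨x, hx⟩ := contains000_iff.1 h
    have hle : g.count x ≤ e.count x := hsubl.count_le x
    have : e.count x ≤ 2 := by
      by_contra hc
      exact h000 (contains000_iff.2 ⟨x, by omega⟩)
    omega
  · -- toFinset
    ext x
    simp only [List.mem_toFinset]
    constructor
    · exact fun h => hsubl.subset h
    · intro h
      rcases eq_or_ne x M with rfl | hx
      · exact List.count_pos_iff.1 (by omega)
      · have : g.count x = e.count x := by
          rw [hg, count_eraseIdx' hMlt, heM, if_neg (Ne.symm hx)]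
          simp
        have hpos : 0 < e.count x := List.count_pos_iff.2 h
        exact List.count_pos_iff.1 (by omega)
  · -- g ≠ []
    intro h
    rw [h] at hglen
    simp at hglen
    omega
  · -- descent value
    have hMg : M < g.length := by omega
    rw [hget M hMg, if_neg (lt_irrefl _)]
    have := prmx0_descent (l := e) (by rw [hpM]; omega)
    rw [hpM, heM] at this
    exact this
  · -- reconstruction
    have := insertIdx_eraseIdx_self e M hMlt
    rw [heM] at this
    exact this

/-- structural consequences for a sequence with unique maximum and nonzero rank -/
lemma insert_case {g : List ℕ} (hinv : IsInvSeq g) (h102 : ¬Contains102 g)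
    (h000 : ¬Contains000 g) (hne : g ≠ []) (hcnt : g.count (listMax g) = 1)
    (hrk : invRank g ≠ 0) :
    listMax g + 1 ≤ g.length ∧
    (IsInvSeq (g.insertIdx (listMax g) (listMax g)) ∧
     ¬Contains102 (g.insertIdx (listMax g) (listMax g)) ∧
     ¬Contains000 (g.insertIdx (listMax g) (listMax g)) ∧
     (g.insertIdx (listMax g) (listMax g)).toFinset = g.toFinset ∧
     listMax (g.insertIdx (listMax g) (listMax g)) = listMax g ∧
     prmx0 (g.insertIdx (listMax g) (listMax g)) = listMax g ∧
     invRank (g.insertIdx (listMax g) (listMax g)) = 0 ∧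
     (g.insertIdx (listMax g) (listMax g)).count (listMax g) = 2) := by
  set M := listMax g with hM
  set p' := prmx0 g with hp'
  have hp'lt : p' < g.length := by rw [hp']; exact prmx0_lt_length hne
  have hpmax : g.getD p' 0 = M := by rw [hp', hM]; exact getD_prmx0 hne h102
  have hMp' : M ≤ p' := hpmax ▸ hinv p' hp'lt
  have hMltp' : M < p' := by
    rcases eq_or_lt_of_le hMp' with h | h
    · exfalso; apply hrk; unfold invRank; omega
    · exact h
  have hMle : M + 1 ≤ g.length := by omega
  have hMleg : M ≤ g.length := by omega
  set e := g.insertIdx M M with he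
  have helen : e.length = g.length + 1 := List.length_insertIdx_of_le_length hMleg _
  have hget : ∀ i, i < e.length →
      e.getD i 0 = if i < M then g.getD i 0 else if i = M then M else g.getD (i-1) 0 := by
    intro i hi
    exact getD_insertIdx' hMleg (by omega)
  have hcnte : ∀ x, e.count x = g.count x + (if M = x then 1 else 0) := by
    intro x; exact count_insertIdx' hMleg
  have hmemE : ∀ x, x ∈ e ↔ x = M ∨ x ∈ g := fun x => List.mem_insertIdx hMleg
  have hemax : listMax e = M := by
    refine le_antisymm (listMax_le fun a ha => ?_) (le_listMax ((hmemE M).2 (Or.inl rfl)))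
    rcases (hmemE a).1 ha with rfl | h
    · exact le_refl _
    · exact hM ▸ le_listMax h
  have hgM : g.getD M 0 < M := by
    have hle : g.getD M 0 ≤ M := hM ▸ le_listMax (getD_mem (by omega))
    rcases eq_or_lt_of_le hle with h | h
    · exfalso
      have := two_le_count_of hMltp' hp'lt h hpmax
      omega
    · exact h
  have hprmxE : prmx0 e = M := by
    apply prmx0_eq_of (by omega)
    · intro i hi
      rw [hget i (by omega), hget (i+1) (by omega), if_pos hi]
      rcases lt_or_eq_of_le (show i + 1 ≤ M by omega) with h | h
      · rw [if_pos h]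
        exact prmx0_mono i (by omega)
      · rw [if_neg (by omega), if_pos h]
        exact hM ▸ le_listMax (getD_mem (by omega))
    · right
      rw [hget (M+1) (by omega), hget M (by omega), if_neg (by omega), if_neg (by omega),
        if_neg (lt_irrefl _), if_pos rfl]
      simpa using hgM
  refine ⟨hMle, ?_, ?_, ?_, ?_, hemax, hprmxE, ?_, ?_⟩
  · -- IsInvSeq e
    intro i hi
    rw [hget i hi]
    split
    · exact hinv i (by omega)
    · split
      · omega
      · have := hinv (i-1) (by omega)
        omega
  · -- ¬ Contains102 e
    rintro ⟨i, j, k, hij, hjk, hk, h1, h2⟩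
    have hvk : e.getD k 0 ≤ M := hemax ▸ le_listMax (getD_mem hk)
    have hgetM : ∀ x, x = M → x < e.length → e.getD x 0 = M := by
      intro x hx hxl
      rw [hget x hxl, if_neg (by omega), if_pos hx]
    rcases eq_or_ne k M with hkM | hkM
    · -- k = M
      have hiM : i < M := by omega
      have hjM : j < M := by omega
      have hei : e.getD i 0 = g.getD i 0 := by rw [hget i (by omega), if_pos hiM]
      have hej : e.getD j 0 = g.getD j 0 := by rw [hget j (by omega), if_pos hjM]
      have hek : e.getD k 0 = M := hgetM k hkM hk
      apply h102
      refine ⟨i, j, p', hij, lt_trans hjM hMltp', hp'lt, ?_, ?_⟩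
      · rw [← hei, ← hej]; exact h1
      · rw [hpmax, ← hei]
        rw [hek] at h2
        exact h2
    · rcases eq_or_ne i M with hiM | hiM
      · have := hgetM i hiM (by omega)
        omega
      · rcases eq_or_ne j M with hjM | hjM
        · have := hgetM j hjM (by omega)
          have hvi : e.getD i 0 ≤ M := hemax ▸ le_listMax (getD_mem (by omega))
          omega
        · -- none of i, j, k equals M
          have hι : ∀ x, x ≠ M → x < e.length → ∃ y, y < g.length ∧
              e.getD x 0 = g.getD y 0 ∧ ((x < M ∧ y = x) ∨ (M < x ∧ y = x - 1)) := by
            intro x hx hxl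
            rcases lt_or_gt_of_ne hx with h | h
            · exact ⟨x, by omega, by rw [hget x hxl, if_pos h], Or.inl ⟨h, rfl⟩⟩
            · exact ⟨x - 1, by omega,
                by rw [hget x hxl, if_neg (by omega), if_neg (by omega)], Or.inr ⟨h, rfl⟩⟩
          obtain ⟨yi, hyi, hevi, hdi⟩ := hι i hiM (by omega)
          obtain ⟨yj, hyj, hevj, hdj⟩ := hι j hjM (by omega)
          obtain ⟨yk, hyk, hevk, hdk⟩ := hι k hkM hk
          apply h102
          exact ⟨yi, yj, yk, by omega, by omega, hyk,
            by rw [← hevi, ← hevj]; exact h1,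
            by rw [← hevi, ← hevk]; exact h2⟩
  · -- ¬ Contains000 e
    intro h
    obtain ⟨x, hx⟩ := contains000_iff.1 h
    rw [hcnte x] at hx
    rcases eq_or_ne M x with rfl | hMx
    · rw [hcnt] at hx; simp at hx
    · rw [if_neg hMx] at hx
      exact h000 (contains000_iff.2 ⟨x, by omega⟩)
  · -- toFinset
    ext x
    simp only [List.mem_toFinset]
    rw [hmemE x]
    constructor
    · rintro (rfl | h)
      · exact List.count_pos_iff.1 (by omega)
      · exact h
    · exact Or.inr
  · -- invRank
    unfold invRank
    rw [hprmxE, hemax]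
    omega
  · rw [hcnte M, hcnt, if_pos rfl]

theorem stmt15 (m : ℕ) (hm : 1 ≤ m) :
    Set.BijOn
      (fun l : List ℕ =>
        if List.count (listMax l) l = 1 then l else l.eraseIdx (prmx0 l))
      {l : List ℕ | IsInvSeq l ∧ ¬ Contains102 l ∧ ¬ Contains000 l ∧
        l.toFinset.card = m ∧ invRank l = 0}
      {l : List ℕ | IsInvSeq l ∧ ¬ Contains102 l ∧ ¬ Contains000 l ∧
        l.toFinset.card = m ∧ List.count (listMax l) l = 1} ∧
    ({l : List ℕ | IsInvSeq l ∧ ¬ Contains102 l ∧ ¬ Contains000 l ∧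
        l.toFinset.card = m ∧ invRank l = 0}).ncard
      = ({l : List ℕ | IsInvSeq l ∧ ¬ Contains102 l ∧ ¬ Contains000 l ∧
        l.toFinset.card = m ∧ List.count (listMax l) l = 1}).ncard := by
  have hne' : ∀ l : List ℕ, l.toFinset.card = m → l ≠ [] := by
    rintro l hcard rfl
    simp at hcard
    omega
  have hcnt12 : ∀ l : List ℕ, ¬Contains000 l → l ≠ [] →
      l.count (listMax l) = 1 ∨ l.count (listMax l) = 2 := by
    intro l h000 hne
    have h1 : 1 ≤ l.count (listMax l) := List.count_pos_iff.2 (listMax_mem hne)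
    have h2 : l.count (listMax l) ≤ 2 := by
      by_contra h
      exact h000 (contains000_iff.2 ⟨listMax l, by omega⟩)
    omega
  have hbij : Set.BijOn
      (fun l : List ℕ =>
        if List.count (listMax l) l = 1 then l else l.eraseIdx (prmx0 l))
      {l : List ℕ | IsInvSeq l ∧ ¬ Contains102 l ∧ ¬ Contains000 l ∧
        l.toFinset.card = m ∧ invRank l = 0}
      {l : List ℕ | IsInvSeq l ∧ ¬ Contains102 l ∧ ¬ Contains000 l ∧
        l.toFinset.card = m ∧ List.count (listMax l) l = 1} := by
    refine ⟨?_, ?_, ?_⟩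
    · -- MapsTo
      rintro e ⟨hinv, h102, h000, hcard, hrk⟩
      have hne : e ≠ [] := hne' e hcard
      rcases hcnt12 e h000 hne with h1 | h2
      · show (if List.count (listMax e) e = 1 then e else e.eraseIdx (prmx0 e)) ∈ _
        rw [if_pos h1]
        exact ⟨hinv, h102, h000, hcard, h1⟩
      · obtain ⟨hpM, hM1, hinvg, h102g, h000g, hfing, hmaxg, hcntg, hgne, hgd, hrec⟩ :=
          erase_case hinv h102 h000 hne hrk h2
        show (if List.count (listMax e) e = 1 then e else e.eraseIdx (prmx0 e)) ∈ _
        rw [if_neg (by omega), hpM]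
        exact ⟨hinvg, h102g, h000g, by rw [hfing]; exact hcard, by rw [hmaxg]; exact hcntg⟩
    · -- InjOn
      rintro e1 ⟨hinv1, h1021, h0001, hcard1, hrk1⟩ e2 ⟨hinv2, h1022, h0002, hcard2, hrk2⟩ heq
      have hne1 : e1 ≠ [] := hne' e1 hcard1
      have hne2 : e2 ≠ [] := hne' e2 hcard2
      simp only at heq
      -- key fact: an erase-image has small value at position (listMax)
      have key : ∀ e : List ℕ, IsInvSeq e → ¬Contains102 e → ¬Contains000 e → e ≠ [] →
          invRank e = 0 → e.count (listMax e) = 2 →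
          invRank (e.eraseIdx (prmx0 e)) ≠ 0 := by
        intro e hinv h102 h000 hne hrk h2
        obtain ⟨hpM, hM1, hinvg, h102g, h000g, hfing, hmaxg, hcntg, hgne, hgd, hrec⟩ :=
          erase_case hinv h102 h000 hne hrk h2
        rw [hpM]
        intro hrkg
        set g := e.eraseIdx (listMax e) with hg
        have hpg : g.getD (prmx0 g) 0 = listMax g := getD_prmx0 hgne h102g
        have hplt : prmx0 g < g.length := prmx0_lt_length hgne
        have heq2 : prmx0 g = listMax g := by
          have h1 : listMax g ≤ prmx0 g := le_of_eq_of_le hpg.symm (hinvg (prmx0 g) hplt)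
          unfold invRank at hrkg
          omega
        rw [heq2, hmaxg] at hpg
        omega
      rcases hcnt12 e1 h0001 hne1 with hc1 | hc1 <;> rcases hcnt12 e2 h0002 hne2 with hc2 | hc2
      · rw [if_pos hc1, if_pos hc2] at heq; exact heq
      · rw [if_pos hc1, if_neg (by omega)] at heq
        exfalso
        apply key e2 hinv2 h1022 h0002 hne2 hrk2 hc2
        rw [← heq]
        exact hrk1
      · rw [if_neg (by omega), if_pos hc2] at heq
        exfalso
        apply key e1 hinv1 h1021 h0001 hne1 hrk1 hc1
        rw [heq]
        exact hrk2
      · rw [if_neg (by omega), if_neg (by omega)] at heq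
        obtain ⟨hpM1, _, _, _, _, _, hmax1, _, _, _, hrec1⟩ :=
          erase_case hinv1 h1021 h0001 hne1 hrk1 hc1
        obtain ⟨hpM2, _, _, _, _, _, hmax2, _, _, _, hrec2⟩ :=
          erase_case hinv2 h1022 h0002 hne2 hrk2 hc2
        rw [hpM1, hpM2] at heq
        have hMeq : listMax e1 = listMax e2 := by
          rw [← hmax1, ← hmax2, heq]
        rw [← hrec1, ← hrec2, heq, hMeq]
    · -- SurjOn
      rintro g ⟨hinv, h102, h000, hcard, hcnt⟩
      have hne : g ≠ [] := hne' g hcard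
      by_cases hrk : invRank g = 0
      · exact ⟨g, ⟨hinv, h102, h000, hcard, hrk⟩,
          show (if List.count (listMax g) g = 1 then g else g.eraseIdx (prmx0 g)) = g
            from if_pos hcnt⟩
      · obtain ⟨hMle, hinvE, h102E, h000E, hfinE, hmaxE, hprmxE, hrkE, hcntE⟩ :=
          insert_case hinv h102 h000 hne hcnt hrk
        refine ⟨g.insertIdx (listMax g) (listMax g),
          ⟨hinvE, h102E, h000E, by rw [hfinE]; exact hcard, hrkE⟩, ?_⟩
        show (if List.count (listMax (g.insertIdx (listMax g) (listMax g)))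
              (g.insertIdx (listMax g) (listMax g)) = 1
            then g.insertIdx (listMax g) (listMax g)
            else (g.insertIdx (listMax g) (listMax g)).eraseIdx
              (prmx0 (g.insertIdx (listMax g) (listMax g)))) = g
        rw [hmaxE, if_neg (by omega), hprmxE]
        exact List.eraseIdx_insertIdx_self _
  refine ⟨hbij, ?_⟩
  rw [← hbij.image_eq, Set.ncard_image_of_injOn hbij.injOn]
end

section
/- For every integer m ≥ 1, the following binomial identity holds: Σ_{n=m}^{2m} (1/m)·C(m, n−m)·Σ_{j=0}^{n−m} C(n−m, j)·C(n+m−j, 2m+j+1) = (1/(3m+1))·C(4m, m). -/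
open Polynomial Finset

lemma L1 (m k j : ℕ) (hm : 1 ≤ m) (hk : k ≤ m) (hj : j ≤ k) :
    (((1 + X : ℕ[X]) ^ (2 * m + k - j) * (X ^ 2) ^ j) * X ^ (m - k)).coeff (m - 1)
      = (2 * m + k - j).choose (2 * m + j + 1) := by
  rw [← pow_mul, mul_assoc, ← pow_add, coeff_mul_X_pow', coeff_one_add_X_pow]
  rcases le_or_gt (2 * j + 1) k with h | h
  · rw [if_pos (by omega)]
    have h1 : m - 1 - (2 * j + (m - k)) = (2 * m + k - j) - (2 * m + j + 1) := by omega
    rw [h1, Nat.choose_symm (by omega), Nat.cast_id]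
  · rw [if_neg (by omega)]
    exact (Nat.choose_eq_zero_of_lt (by omega)).symm

lemma L2 (m k : ℕ) (hm : 1 ≤ m) (hk : k ≤ m) :
    (((1 + X : ℕ[X]) ^ (2 * m) * (1 + X + X ^ 2) ^ k) * X ^ (m - k)).coeff (m - 1)
      = ∑ j ∈ range (k + 1), (k.choose j) * ((2 * m + k - j).choose (2 * m + j + 1)) := by
  have expand : ((1 : ℕ[X]) + X + X ^ 2) ^ k
      = ∑ j ∈ range (k + 1), (X ^ 2) ^ j * (1 + X) ^ (k - j) * ((k.choose j : ℕ) : ℕ[X]) := by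
    rw [add_comm ((1 : ℕ[X]) + X) (X ^ 2)]
    exact add_pow _ _ k
  rw [expand, Finset.mul_sum, Finset.sum_mul, finset_sum_coeff]
  refine Finset.sum_congr rfl fun j hj => ?_
  have hjk : j ≤ k := by simpa [Nat.lt_succ_iff] using hj
  have heq : (1 + X : ℕ[X]) ^ (2 * m) * ((X ^ 2) ^ j * (1 + X) ^ (k - j) * ((k.choose j : ℕ) : ℕ[X])) * X ^ (m - k)
      = ((k.choose j : ℕ) : ℕ[X]) * (((1 + X) ^ (2 * m + k - j) * (X ^ 2) ^ j) * X ^ (m - k)) := by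
    have h2 : 2 * m + k - j = 2 * m + (k - j) := by omega
    rw [h2, pow_add]
    ring
  rw [heq, ← C_eq_natCast, coeff_C_mul, L1 m k j hm hk hjk, Nat.cast_id]

lemma L3 (m : ℕ) :
    ∑ k ∈ range (m + 1),
      ((m.choose k : ℕ) : ℕ[X]) * (((1 + X : ℕ[X]) ^ (2 * m) * (1 + X + X ^ 2) ^ k) * X ^ (m - k))
      = (1 + X) ^ (4 * m) := by
  have expand : ((1 : ℕ[X]) + X + X ^ 2 + X) ^ m
      = ∑ k ∈ range (m + 1), (1 + X + X ^ 2) ^ k * X ^ (m - k) * ((m.choose k : ℕ) : ℕ[X]) := by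
    exact add_pow _ _ m
  have e2 : ((1 : ℕ[X]) + X + X ^ 2 + X) = (1 + X) ^ 2 := by ring
  have e3 : ((1 + X : ℕ[X]) ^ 2) ^ m = (1 + X) ^ (2 * m) := by rw [← pow_mul, mul_comm]
  calc ∑ k ∈ range (m + 1),
      ((m.choose k : ℕ) : ℕ[X]) * (((1 + X) ^ (2 * m) * (1 + X + X ^ 2) ^ k) * X ^ (m - k))
      = (1 + X) ^ (2 * m) * ∑ k ∈ range (m + 1), (1 + X + X ^ 2) ^ k * X ^ (m - k) * ((m.choose k : ℕ) : ℕ[X]) := by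
        rw [Finset.mul_sum]; exact Finset.sum_congr rfl fun k _ => by ring
    _ = (1 + X) ^ (2 * m) * (1 + X) ^ (2 * m) := by rw [← expand, e2, e3]
    _ = (1 + X) ^ (4 * m) := by rw [← pow_add]; ring_nf

lemma key (m : ℕ) (hm : 1 ≤ m) :
    ∑ k ∈ range (m + 1), (m.choose k) *
      ∑ j ∈ range (k + 1), (k.choose j) * ((2 * m + k - j).choose (2 * m + j + 1))
      = (4 * m).choose (m - 1) := by
  have hc := congrArg (fun p : ℕ[X] => p.coeff (m - 1)) (L3 m)
  simp only [finset_sum_coeff, coeff_one_add_X_pow, Nat.cast_id] at hc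
  rw [← hc]
  refine Finset.sum_congr rfl fun k hk => ?_
  have hkm : k ≤ m := by simpa [Nat.lt_succ_iff] using hk
  rw [← C_eq_natCast, coeff_C_mul, L2 m k hm hkm, Nat.cast_id]

theorem stmt18 (m : ℕ) (hm : 1 ≤ m) :
    ∑ n ∈ Finset.Icc m (2 * m),
      (1 / (m : ℚ)) * (Nat.choose m (n - m)) *
        ∑ j ∈ Finset.range (n - m + 1),
          (Nat.choose (n - m) j : ℚ) * (Nat.choose (n + m - j) (2 * m + j + 1))
      = (1 / (3 * (m : ℚ) + 1)) * (Nat.choose (4 * m) m) := by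
  have hre : ∑ n ∈ Finset.Icc m (2 * m),
      (1 / (m : ℚ)) * (Nat.choose m (n - m)) *
        ∑ j ∈ Finset.range (n - m + 1),
          (Nat.choose (n - m) j : ℚ) * (Nat.choose (n + m - j) (2 * m + j + 1))
      = ∑ k ∈ range (m + 1), (1 / (m : ℚ)) * ((Nat.choose m k) *
        ∑ j ∈ Finset.range (k + 1),
          (Nat.choose k j : ℚ) * (Nat.choose (2 * m + k - j) (2 * m + j + 1))) := by
    refine Finset.sum_nbij' (fun n => n - m) (fun k => m + k) ?_ ?_ ?_ ?_ ?_
    · intro n hn; simp only [Finset.mem_Icc] at hn; simp only [Finset.mem_range]; omega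
    · intro k hk; simp only [Finset.mem_range] at hk; simp only [Finset.mem_Icc]; omega
    · intro n hn; simp only [Finset.mem_Icc] at hn
      show m + (n - m) = n
      omega
    · intro k hk; simp only [Finset.mem_range] at hk
      show m + k - m = k
      omega
    · intro n hn
      simp only [Finset.mem_Icc] at hn
      show (1 / (m : ℚ)) * (Nat.choose m (n - m)) *
          ∑ j ∈ Finset.range (n - m + 1),
            (Nat.choose (n - m) j : ℚ) * (Nat.choose (n + m - j) (2 * m + j + 1))
        = (1 / (m : ℚ)) * ((Nat.choose m (n - m)) *
          ∑ j ∈ Finset.range ((n - m) + 1),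
            (Nat.choose (n - m) j : ℚ) * (Nat.choose (2 * m + (n - m) - j) (2 * m + j + 1)))
      rw [mul_assoc]
      congr 1
      refine congrArg _ (Finset.sum_congr rfl fun j hj => ?_)
      have h7 : n + m - j = 2 * m + (n - m) - j := by omega
      rw [h7]
  rw [hre, ← Finset.mul_sum]
  have h3 : ∑ k ∈ range (m + 1), ((Nat.choose m k : ℚ) *
        ∑ j ∈ Finset.range (k + 1),
          (Nat.choose k j : ℚ) * (Nat.choose (2 * m + k - j) (2 * m + j + 1)))
      = ((4 * m).choose (m - 1) : ℚ) := by
    rw [← key m hm]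
    push_cast
    rfl
  rw [h3]
  have h4 : (Nat.choose (4 * m) m) * m = (Nat.choose (4 * m) (m - 1)) * (3 * m + 1) := by
    have h5 := Nat.choose_succ_right_eq (4 * m) (m - 1)
    have e : m - 1 + 1 = m := by omega
    have e2 : 4 * m - (m - 1) = 3 * m + 1 := by omega
    rw [e, e2] at h5
    exact h5
  have hm0 : (m : ℚ) ≠ 0 := by positivity
  have hm1 : (3 * (m : ℚ) + 1) ≠ 0 := by positivity
  have h6 := congrArg (fun n : ℕ => (n : ℚ)) h4
  push_cast at h6
  field_simp
  linarith [h6]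
end

section
/- Let b ∈ ℚ[[y]] be a formal power series satisfying b = 1 + y·b⁴. Then for every integer k ≥ 1 and every integer m ≥ 0, the coefficient of y^m in b^k equals (k/(4m+k))·C(4m+k, m). -/
open Finset PowerSeries

lemma vdm_range (p q r : ℕ) :
    ∑ j ∈ range (r + 1), p.choose j * q.choose (r - j) = (p + q).choose r := by
  rw [Nat.add_choose_eq, Finset.Nat.sum_antidiagonal_eq_sum_range_succ_mk]

lemma trunc_vdm (p q r k : ℕ) (hk : p < k) :
    ∑ i ∈ range k, (if i ≤ r then p.choose i * q.choose (r - i) else 0)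
      = (p + q).choose r := by
  have h1 : ∑ i ∈ range k, (if i ≤ r then p.choose i * q.choose (r - i) else 0)
      = ∑ i ∈ range (k + r + 1), (if i ≤ r then p.choose i * q.choose (r - i) else 0) := by
    apply Finset.sum_subset
    · exact Finset.range_subset_range.mpr (by omega)
    · intro x hx hx'
      simp only [Finset.mem_range] at hx hx'
      have : p.choose x = 0 := Nat.choose_eq_zero_of_lt (by omega)
      simp [this]
  have h2 : ∑ i ∈ range (k + r + 1), (if i ≤ r then p.choose i * q.choose (r - i) else 0)
      = ∑ i ∈ range (r + 1), (if i ≤ r then p.choose i * q.choose (r - i) else 0) := by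
    symm
    apply Finset.sum_subset
    · exact Finset.range_subset_range.mpr (by omega)
    · intro x hx hx'
      simp only [Finset.mem_range] at hx hx'
      have : ¬ x ≤ r := by omega
      simp [this]
  rw [h1, h2, ← vdm_range p q r]
  apply Finset.sum_congr rfl
  intro x hx
  simp only [Finset.mem_range] at hx
  rw [if_pos (by omega)]

lemma keyNat (k M : ℕ) (hk : 1 ≤ k) (hM : 1 ≤ M) :
    ∑ j ∈ range (k + 1), (if j ≤ M then j * (4 * M).choose (M - j) * k.choose j else 0)
      = k * ((k - 1) + 4 * M).choose (M - 1) := by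
  rw [Finset.sum_range_succ']
  simp only [Nat.zero_le, if_true, zero_mul, Nat.mul_zero, add_zero, Nat.choose_zero_right]
  have step : ∀ i, (if i + 1 ≤ M then (i + 1) * (4 * M).choose (M - (i + 1)) * k.choose (i + 1) else 0)
      = k * (if i ≤ M - 1 then (k - 1).choose i * (4 * M).choose ((M - 1) - i) else 0) := by
    intro i
    by_cases h : i + 1 ≤ M
    · rw [if_pos h, if_pos (by omega)]
      have h2 : k * (k - 1).choose i = k.choose (i + 1) * (i + 1) := by
        have := Nat.add_one_mul_choose_eq (k - 1) i
        simpa [Nat.succ_eq_add_one, Nat.sub_add_cancel hk] using this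
      have h3 : M - (i + 1) = (M - 1) - i := by omega
      rw [h3]
      calc (i + 1) * (4 * M).choose ((M - 1) - i) * k.choose (i + 1)
          = (k.choose (i + 1) * (i + 1)) * (4 * M).choose ((M - 1) - i) := by ring
        _ = (k * (k - 1).choose i) * (4 * M).choose ((M - 1) - i) := by rw [h2]
        _ = k * ((k - 1).choose i * (4 * M).choose ((M - 1) - i)) := by ring
    · rw [if_neg h, if_neg (by omega), mul_zero]
  rw [Finset.sum_congr rfl (fun i _ => step i), ← Finset.mul_sum,
    trunc_vdm (k - 1) (4 * M) (M - 1) k (by omega)]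

theorem stmt19 (b : PowerSeries ℚ) (hb : b = 1 + PowerSeries.X * b ^ 4) :
    ∀ k m : ℕ, 1 ≤ k →
      PowerSeries.coeff (R := ℚ) m (b ^ k)
        = ((k : ℚ) / (4 * (m : ℚ) + (k : ℚ))) * (Nat.choose (4 * m + k) m) := by
  have hb0 : PowerSeries.constantCoeff (R := ℚ) b = 1 := by
    rw [hb]; simp
  have key : ∀ m k : ℕ, 1 ≤ k → PowerSeries.coeff (R := ℚ) m (b ^ k)
        = ((k : ℚ) / (4 * (m : ℚ) + (k : ℚ))) * (Nat.choose (4 * m + k) m) := by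
    intro m
    induction m using Nat.strong_induction_on with
    | _ m IH =>
      intro k hk
      rcases m with _ | M
      · have hk0 : (k : ℚ) ≠ 0 := by by_contra h; simp only [Nat.cast_eq_zero] at h; omega
        simp only [PowerSeries.coeff_zero_eq_constantCoeff, map_pow, hb0, one_pow,
          Nat.cast_zero, mul_zero, zero_add, Nat.mul_zero, Nat.choose_zero_right,
          Nat.cast_one, mul_one]
        field_simp
      · -- m = M + 1
        have hbk : b ^ k = ∑ j ∈ range (k + 1),
            X ^ j * b ^ (4 * j) * (PowerSeries.C (R := ℚ) (k.choose j : ℚ)) := by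
          conv_lhs => rw [hb, add_comm, add_pow]
          apply Finset.sum_congr rfl
          intro j _
          rw [mul_pow, one_pow, mul_one, ← pow_mul]
          congr 1
        have hx : ∀ (j : ℕ) (f : PowerSeries ℚ), PowerSeries.coeff (R := ℚ) (M + 1) (X ^ j * f)
            = if j ≤ M + 1 then PowerSeries.coeff (R := ℚ) (M + 1 - j) f else 0 := by
          intro j f
          by_cases h : j ≤ M + 1
          · rw [if_pos h]
            have hMd : (M + 1 - j) + j = M + 1 := by omega
            conv_lhs => rw [← hMd]
            rw [PowerSeries.coeff_X_pow_mul]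
          · rw [if_neg h]
            exact PowerSeries.X_pow_dvd_iff.mp ⟨f, rfl⟩ (M + 1) (by omega)
        rw [hbk, map_sum]
        have termeq : ∀ j ∈ range (k + 1),
            PowerSeries.coeff (R := ℚ) (M + 1) (X ^ j * b ^ (4 * j) * PowerSeries.C (R := ℚ) (k.choose j : ℚ))
            = (if j ≤ M + 1 then
                ((j : ℚ) * ((4 * (M + 1)).choose (M + 1 - j)) * (k.choose j)) / ((M : ℚ) + 1)
              else 0) := by
          intro j hj
          rw [PowerSeries.coeff_mul_C, hx]
          by_cases h : j ≤ M + 1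
          · rw [if_pos h, if_pos h]
            rcases Nat.eq_zero_or_pos j with hj0 | hj1
            · subst hj0
              simp
            · have hlt : M + 1 - j < M + 1 := by omega
              rw [IH (M + 1 - j) hlt (4 * j) (by omega)]
              have hcast : ((M + 1 - j : ℕ) : ℚ) = (M : ℚ) + 1 - (j : ℚ) := by
                rw [Nat.cast_sub h]
                push_cast
                ring
              have hnat : 4 * (M + 1 - j) + 4 * j = 4 * (M + 1) := by omega
              rw [hnat, hcast]
              have hM1 : ((M : ℚ) + 1) ≠ 0 := by positivity
              have hj0 : (4 : ℚ) * ((M : ℚ) + 1 - j) + (4 * j : ℕ) = 4 * ((M : ℚ) + 1) := by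
                push_cast; ring
              rw [hj0]
              push_cast
              field_simp
          · rw [if_neg h, if_neg h, zero_mul]
        rw [Finset.sum_congr rfl termeq]
        have hsum : ∑ j ∈ range (k + 1), (if j ≤ M + 1 then
                ((j : ℚ) * ((4 * (M + 1)).choose (M + 1 - j)) * (k.choose j)) / ((M : ℚ) + 1)
              else 0)
            = (↑(k * ((k - 1) + 4 * (M + 1)).choose M) : ℚ) / ((M : ℚ) + 1) := by
          have hkn := keyNat k (M + 1) hk (by omega)
          simp only [Nat.add_sub_cancel] at hkn
          rw [← hkn]
          rw [Nat.cast_sum, Finset.sum_div]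
          apply Finset.sum_congr rfl
          intro j _
          split_ifs with h
          · push_cast; ring
          · simp
        rw [hsum]
        have hnid : (4 * (M + 1) + k) * ((k - 1) + 4 * (M + 1)).choose M
            = (4 * (M + 1) + k).choose (M + 1) * (M + 1) := by
          have := Nat.add_one_mul_choose_eq ((k - 1) + 4 * (M + 1)) M
          have he : (k - 1) + 4 * (M + 1) + 1 = 4 * (M + 1) + k := by omega
          simpa [Nat.succ_eq_add_one, he] using this
        have hcid : ((4 * (M + 1) + k : ℕ) : ℚ) * (((k - 1) + 4 * (M + 1)).choose M : ℚ)
            = ((4 * (M + 1) + k).choose (M + 1) : ℚ) * ((M : ℚ) + 1) := by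
          exact_mod_cast congrArg (Nat.cast : ℕ → ℚ) hnid
        have hM1 : ((M : ℚ) + 1) ≠ 0 := by positivity
        have hden : (4 : ℚ) * ((M : ℚ) + 1) + k ≠ 0 := by positivity
        have hden' : ((4 * (M + 1) + k : ℕ) : ℚ) = 4 * ((M : ℚ) + 1) + k := by push_cast; ring
        rw [hden'] at hcid
        push_cast
        field_simp
        linear_combination hcid
  intro k m hk; exact key m k hk
end
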